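/- Let Ḡ be an orientation of a finite undirected simple graph G=(V,E) satisfying Invariant 1, let {u,v} ∉ E with odeg(u,Ḡ) ≤ odeg(v,Ḡ), and let G̃ be the orientation of G + {u,v} obtained from Ḡ by adding the directed edge (u,v). Then there exists an orientation of G + {u,v} satisfying Invariant 1 that is either G̃ itself or is obtained from G̃ by flipping a single improving path starting at u. In particular, after inserting one edge, at most one improving-path flip restores an optimal orientation satisfying Invariant 1. -/

import Mathlib

open Finset

/-- An orientation of a simple graph `G`: a choice, for each edge `{u,v}` of `G`,
of exactly one of the directed edges `(u,v)`, `(v,u)`. -/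
structure GraphOrientation {V : Type*} (G : SimpleGraph V) where
  dir : V → V → Bool
  dir_adj : ∀ u v, dir u v = true → G.Adj u v
  exactly_one : ∀ u v, G.Adj u v → (dir u v = true ↔ ¬ dir v u = true)

/-- Out-degree of `v` w.r.t. a directed-edge relation `d`. -/
def outDegF {V : Type*} [Fintype V] (d : V → V → Bool) (v : V) : ℕ :=
  (Finset.univ.filter fun w => d v w = true).card

/-- Out-degree of a vertex in an orientation. -/
def GraphOrientation.outDeg {V : Type*} [Fintype V] {G : SimpleGraph V}
    (o : GraphOrientation G) (v : V) : ℕ := outDegF o.dir v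

/-- Maximum out-degree `Δ` of an orientation. -/
def GraphOrientation.maxOutDeg {V : Type*} [Fintype V] {G : SimpleGraph V}
    (o : GraphOrientation G) : ℕ := Finset.univ.sup o.outDeg

/-- `|E(S)|`: the number of edges of `G` with both endpoints in `S`. -/
def edgeCount {V : Type*} [Fintype V] [DecidableEq V] (G : SimpleGraph V)
    [DecidableRel G.Adj] (S : Finset V) : ℕ :=
  (G.edgeFinset.filter fun e => ∀ x ∈ e, x ∈ S).card

/-- A directed path in an orientation: a list of distinct vertices, of length at
least two (i.e. `k ≥ 1` edges), with consecutive vertices joined by directed edges. -/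
def IsDirPath {V : Type*} {G : SimpleGraph V} (o : GraphOrientation G) (p : List V) : Prop :=
  p.Nodup ∧ 2 ≤ p.length ∧ List.Chain' (fun a b => o.dir a b = true) p

/-- A directed path from `a` to `b`. -/
def IsPathFrom {V : Type*} {G : SimpleGraph V} (o : GraphOrientation G)
    (p : List V) (a b : V) : Prop :=
  IsDirPath o p ∧ p.head? = some a ∧ p.getLast? = some b

/-- Invariant 1: there is no improving path between any two vertices, i.e. no directed
path `⟨a,…,b⟩` with `odeg(a) > odeg(b) + 1`. -/
def Invariant1 {V : Type*} [Fintype V] {G : SimpleGraph V} (o : GraphOrientation G) : Prop :=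
  ∀ p a b, IsPathFrom o p a b → o.outDeg a ≤ o.outDeg b + 1

/-- Invariant 2: there is no improving path starting at a vertex of maximum out-degree. -/
def Invariant2 {V : Type*} [Fintype V] {G : SimpleGraph V} (o : GraphOrientation G) : Prop :=
  ∀ p a b, IsPathFrom o p a b → o.outDeg a = o.maxOutDeg → o.outDeg a ≤ o.outDeg b + 1

/-- Flipping the directed path `p`: every directed edge `(v_i, v_{i+1})` of `p`
is replaced by the reversed edge `(v_{i+1}, v_i)`; all other edges are unchanged. -/
def flipDir {V : Type*} [DecidableEq V] (d : V → V → Bool) (p : List V) : V → V → Bool :=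
  fun a b => if (a, b) ∈ p.zip p.tail ∨ (b, a) ∈ p.zip p.tail then d b a else d a b

/-- `G + {u,v}`: the graph obtained from `G` by inserting the edge `{u,v}`. -/
def addE {V : Type*} (G : SimpleGraph V) (u v : V) : SimpleGraph V :=
  G ⊔ SimpleGraph.fromEdgeSet {s(u, v)}

/-- `G − {u,v}`: the graph obtained from `G` by deleting the edge `{u,v}`. -/
def delE {V : Type*} (G : SimpleGraph V) (u v : V) : SimpleGraph V :=
  G.deleteEdges {s(u, v)}


section ListAux
open List
variable {V : Type*}

private lemma zt_cons₂ (x y : V) (t : List V) :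
    ((x :: y :: t).zip (x :: y :: t).tail) = (x, y) :: ((y :: t).zip (y :: t).tail) := by
  simp [List.zip]

private lemma zt_fst_mem {l : List V} {a b : V} (h : (a,b) ∈ l.zip l.tail) : a ∈ l :=
  (List.of_mem_zip h).1
private lemma zt_snd_mem {l : List V} {a b : V} (h : (a,b) ∈ l.zip l.tail) : b ∈ l.tail :=
  (List.of_mem_zip h).2
private lemma zt_snd_mem' {l : List V} {a b : V} (h : (a,b) ∈ l.zip l.tail) : b ∈ l :=
  l.tail_subset (zt_snd_mem h)

private lemma zt_fst_mem_dropLast : ∀ {l : List V} {a b : V},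
    (a,b) ∈ l.zip l.tail → a ∈ l.dropLast
  | [], _, _, h => by simp at h
  | [x], _, _, h => by simp at h
  | x :: y :: t, a, b, h => by
    rw [zt_cons₂] at h
    rcases List.mem_cons.1 h with h | h
    · simp_all
    · have := zt_fst_mem_dropLast (l := y :: t) h
      simp only [dropLast_cons₂]
      exact List.mem_cons_of_mem _ this

private lemma zt_append_right : ∀ (l : List V) {m : List V} {a b : V},
    (a,b) ∈ m.zip m.tail → (a,b) ∈ (l ++ m).zip (l ++ m).tail
  | [], m, a, b, h => h
  | [x], m, a, b, h => by
    cases m with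
    | nil => simp at h
    | cons y t =>
      have e : (x :: y :: t).zip (x :: y :: t).tail
          = (x,y) :: ((y::t).zip (y::t).tail) := zt_cons₂ x y t
      simp only [List.singleton_append, e]
      exact List.mem_cons_of_mem _ h
  | x :: x' :: l, m, a, b, h => by
    have ih := zt_append_right (x' :: l) (m := m) h
    show (a,b) ∈ (x :: x' :: (l ++ m)).zip (x :: x' :: (l ++ m)).tail
    rw [zt_cons₂]
    exact List.mem_cons_of_mem _ ih

private lemma zt_append_left : ∀ {l : List V} (m : List V) {a b : V},
    (a,b) ∈ l.zip l.tail → (a,b) ∈ (l ++ m).zip (l ++ m).tail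
  | [], _, _, _, h => by simp at h
  | [x], _, _, _, h => by simp at h
  | x :: y :: t, m, a, b, h => by
    rw [zt_cons₂] at h
    show (a,b) ∈ (x :: y :: (t ++ m)).zip (x :: y :: (t ++ m)).tail
    rw [zt_cons₂]
    rcases List.mem_cons.1 h with h | h
    · exact List.mem_cons.2 (Or.inl h)
    · exact List.mem_cons_of_mem _ (zt_append_left m h)

private lemma head_ne_last {a b : V} {p : List V} (hnd : p.Nodup) (hlen : 2 ≤ p.length)
    (hh : p.head? = some a) (hl : p.getLast? = some b) : a ≠ b := by
  cases p with
  | nil => simp at hh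
  | cons c q =>
    cases q with
    | nil => simp at hlen
    | cons e q' =>
      have hc : c = a := by simpa using hh
      intro hab
      have hbmem : b ∈ e :: q' := by
        have h2 := List.getLast?_eq_getLast (l := c :: e :: q') (by simp)
        rw [hl] at h2
        have hb := (Option.some.inj h2).symm
        rw [List.getLast_cons (by simp)] at hb
        rw [← hb]
        exact List.getLast_mem _
      rw [hc, hab] at hnd
      exact (List.nodup_cons.1 hnd).1 hbmem

private lemma zt_adj {l1 l2 : List V} {x y : V} :
    (x, y) ∈ ((l1 ++ x :: y :: l2).zip (l1 ++ x :: y :: l2).tail) := by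
  apply zt_append_right
  rw [zt_cons₂]
  exact List.mem_cons_self

private lemma chain'_pair {R : V → V → Prop} : ∀ {l : List V}, l.Chain' R →
    ∀ {a b : V}, (a,b) ∈ l.zip l.tail → R a b
  | [], _, _, _, h => by simp at h
  | [x], _, _, _, h => by simp at h
  | x :: y :: t, hc, a, b, h => by
    rw [zt_cons₂] at h
    rcases List.mem_cons.1 h with h | h
    · rw [Prod.mk.injEq] at h
      rw [h.1, h.2]
      exact (List.isChain_cons_cons.1 hc).1
    · exact chain'_pair (List.isChain_cons_cons.1 hc).2 h

private lemma chain'_of_pairs {R : V → V → Prop} : ∀ {l : List V},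
    (∀ a b, (a,b) ∈ l.zip l.tail → R a b) → l.Chain' R
  | [], _ => List.isChain_nil
  | [x], _ => List.isChain_singleton x
  | x :: y :: t, h => by
    refine List.isChain_cons_cons.mpr ?_
    refine ⟨h x y (by rw [zt_cons₂]; exact List.mem_cons_self), ?_⟩
    exact chain'_of_pairs (fun a b hm => h a b (by rw [zt_cons₂]; exact List.mem_cons_of_mem _ hm))

private lemma zt_fst_unique : ∀ {l : List V}, l.Nodup → ∀ {a b c : V},
    (a,b) ∈ l.zip l.tail → (a,c) ∈ l.zip l.tail → b = c
  | [], _, _, _, _, h, _ => by simp at h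
  | [x], _, _, _, _, h, _ => by simp at h
  | x :: y :: t, hnd, a, b, c, h1, h2 => by
    rw [zt_cons₂] at h1 h2
    have hx : x ∉ (y :: t) := (List.nodup_cons.1 hnd).1
    rcases List.mem_cons.1 h1 with h1 | h1 <;> rcases List.mem_cons.1 h2 with h2 | h2
    · rw [Prod.mk.injEq] at h1 h2
      rw [h1.2, h2.2]
    · exfalso; rw [Prod.mk.injEq] at h1; exact hx (h1.1 ▸ zt_fst_mem h2)
    · exfalso; rw [Prod.mk.injEq] at h2; exact hx (h2.1 ▸ zt_fst_mem h1)
    · exact zt_fst_unique (List.nodup_cons.1 hnd).2 h1 h2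

private lemma zt_snd_unique : ∀ {l : List V}, l.Nodup → ∀ {a b c : V},
    (b,a) ∈ l.zip l.tail → (c,a) ∈ l.zip l.tail → b = c
  | [], _, _, _, _, h, _ => by simp at h
  | [x], _, _, _, _, h, _ => by simp at h
  | x :: y :: t, hnd, a, b, c, h1, h2 => by
    rw [zt_cons₂] at h1 h2
    have hy : y ∉ t := (List.nodup_cons.1 (List.nodup_cons.1 hnd).2).1
    rcases List.mem_cons.1 h1 with h1 | h1 <;> rcases List.mem_cons.1 h2 with h2 | h2
    · rw [Prod.mk.injEq] at h1 h2
      rw [h1.1, h2.1]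
    · exfalso; rw [Prod.mk.injEq] at h1; exact hy (h1.2 ▸ zt_snd_mem h2)
    · exfalso; rw [Prod.mk.injEq] at h2; exact hy (h2.2 ▸ zt_snd_mem h1)
    · exact zt_snd_unique (List.nodup_cons.1 hnd).2 h1 h2

private lemma zt_not_head {x : V} {t : List V} (hnd : (x :: t).Nodup) {b : V} :
    (b, x) ∉ (x :: t).zip (x :: t).tail := fun h =>
  (List.nodup_cons.1 hnd).1 (zt_snd_mem h)

private lemma zt_not_last {l : List V} (hnd : l.Nodup) (hne : l ≠ []) {b : V} :
    (l.getLast hne, b) ∉ l.zip l.tail := by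
  intro h
  have h1 := zt_fst_mem_dropLast h
  have he := List.dropLast_append_getLast hne
  have hnd2 : (l.dropLast ++ [l.getLast hne]).Nodup := by rw [he]; exact hnd
  rw [List.nodup_append'] at hnd2
  exact hnd2.2.2 h1 (by simp)

private lemma zt_succ_iff {P1 P2 : List V} {x y : V} (hnd : (P1 ++ x :: P2).Nodup) :
    ((x, y) ∈ (P1 ++ x :: P2).zip (P1 ++ x :: P2).tail) ↔ P2.head? = some y := by
  cases P2 with
  | nil =>
    simp only [head?_nil]
    constructor
    · intro h
      exfalso
      have hx : (P1 ++ [x]).getLast (by simp) = x := by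
        rw [List.getLast_append]; simp
      apply zt_not_last hnd (show P1 ++ [x] ≠ [] by simp) (b := y)
      rw [hx]
      exact h
    · intro h; simp at h
  | cons c t =>
    constructor
    · intro h
      have := zt_fst_unique hnd h (zt_adj (l1 := P1) (l2 := t))
      simp [this]
    · intro h
      simp only [head?_cons, Option.some.injEq] at h
      subst h
      exact zt_adj (l1 := P1) (l2 := t)

private lemma zt_pred_iff {P1 P2 : List V} {x y : V} (hnd : (P1 ++ x :: P2).Nodup) :
    ((y, x) ∈ (P1 ++ x :: P2).zip (P1 ++ x :: P2).tail) ↔ P1.getLast? = some y := by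
  rcases List.eq_nil_or_concat P1 with rfl | ⟨L, r, rfl⟩
  · simp only [List.nil_append, getLast?_nil]
    constructor
    · intro h; exact absurd h (zt_not_head hnd)
    · intro h; simp at h
  · rw [List.concat_eq_append] at hnd ⊢
    rw [List.getLast?_concat]
    have hadj : (r, x) ∈ ((L ++ [r]) ++ x :: P2).zip ((L ++ [r]) ++ x :: P2).tail := by
      have e : (L ++ [r]) ++ x :: P2 = L ++ r :: x :: P2 := by simp
      rw [e]
      exact zt_adj (l1 := L) (l2 := P2)
    constructor
    · intro h
      have := zt_snd_unique hnd h hadj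
      simp [this]
    · intro h
      simp only [Option.some.injEq] at h
      subst h
      exact hadj

private lemma splitFirst {l : List V} (p : V → Prop) [DecidablePred p] (h : ∃ x ∈ l, p x) :
    ∃ l1 s l2, l = l1 ++ s :: l2 ∧ p s ∧ ∀ x ∈ l1, ¬ p x := by
  induction l with
  | nil => simp at h
  | cons a t ih =>
    by_cases ha : p a
    · exact ⟨[], a, t, rfl, ha, by simp⟩
    · obtain ⟨x, hx, hpx⟩ := h
      rcases List.mem_cons.1 hx with rfl | hx
      · exact absurd hpx ha
      · obtain ⟨l1, s, l2, heq, hps, hall⟩ := ih ⟨x, hx, hpx⟩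
        refine ⟨a :: l1, s, l2, by rw [heq]; rfl, hps, ?_⟩
        intro y hy
        rcases List.mem_cons.1 hy with rfl | hy
        · exact ha
        · exact hall y hy

private lemma splitLast {l : List V} (p : V → Prop) [DecidablePred p] (h : ∃ x ∈ l, p x) :
    ∃ l1 s l2, l = l1 ++ s :: l2 ∧ p s ∧ ∀ x ∈ l2, ¬ p x := by
  induction l with
  | nil => simp at h
  | cons a t ih =>
    by_cases ht : ∃ x ∈ t, p x
    · obtain ⟨l1, s, l2, heq, hps, hall⟩ := ih ht
      exact ⟨a :: l1, s, l2, by rw [heq]; rfl, hps, hall⟩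
    · obtain ⟨x, hx, hpx⟩ := h
      have hxa : x = a := by
        rcases List.mem_cons.1 hx with rfl | hx
        · rfl
        · exact absurd ⟨x, hx, hpx⟩ ht
      subst hxa
      exact ⟨[], x, t, rfl, hpx, fun y hy hpy => ht ⟨y, hy, hpy⟩⟩

private lemma getLast?_append_right {l m : List V} (hm : m ≠ []) :
    (l ++ m).getLast? = m.getLast? := by
  rw [List.getLast?_append, List.getLast?_eq_getLast (l := m) hm]
  simp

private lemma head?_append_left {l m : List V} (hl : l ≠ []) :
    (l ++ m).head? = l.head? := by
  rw [List.head?_append, List.head?_eq_head hl]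
  simp

end ListAux


section OrientAux
open List
variable {V : Type*}

private lemma rev_false {H : SimpleGraph V} (t : GraphOrientation H) {a b : V}
    (h : t.dir a b = true) : t.dir b a = false := by
  have h2 := (t.exactly_one a b (t.dir_adj a b h)).mp h
  exact Bool.eq_false_iff.mpr h2

private def flipOrient [DecidableEq V] {H : SimpleGraph V} (t : GraphOrientation H)
    (P : List V) : GraphOrientation H where
  dir := flipDir t.dir P
  dir_adj a b h := by
    unfold flipDir at h
    split at h
    · exact (t.dir_adj b a h).symm
    · exact t.dir_adj a b h
  exactly_one a b hadj := by
    unfold flipDir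
    have hcomm : ((b, a) ∈ P.zip P.tail ∨ (a, b) ∈ P.zip P.tail)
        ↔ ((a, b) ∈ P.zip P.tail ∨ (b, a) ∈ P.zip P.tail) := or_comm
    by_cases hc : (a, b) ∈ P.zip P.tail ∨ (b, a) ∈ P.zip P.tail
    · rw [if_pos hc, if_pos (hcomm.mpr hc)]
      exact t.exactly_one b a hadj.symm
    · rw [if_neg hc, if_neg (fun h => hc (hcomm.mp h))]
      exact t.exactly_one a b hadj

private lemma flipOrient_dir [DecidableEq V] {H : SimpleGraph V} (t : GraphOrientation H)
    (P : List V) : (flipOrient t P).dir = flipDir t.dir P := rfl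

private lemma flip_val [DecidableEq V] (d : V → V → Bool) {P1 P2 : List V} {x : V}
    (hnd : (P1 ++ x :: P2).Nodup) (y : V) :
    flipDir d (P1 ++ x :: P2) x y =
      if P2.head? = some y ∨ P1.getLast? = some y then d y x else d x y := by
  unfold flipDir
  exact if_congr (or_congr (zt_succ_iff hnd) (zt_pred_iff hnd)) rfl rfl

private lemma outDegF_flip_not_mem [Fintype V] [DecidableEq V] (d : V → V → Bool)
    {P : List V} {x : V} (hx : x ∉ P) :
    outDegF (flipDir d P) x = outDegF d x := by
  unfold outDegF
  congr 1
  apply Finset.filter_congr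
  intro y _
  have hc : ¬((x,y) ∈ P.zip P.tail ∨ (y,x) ∈ P.zip P.tail) := by
    rintro (h | h)
    · exact hx (zt_fst_mem h)
    · exact hx (zt_snd_mem' h)
  unfold flipDir
  rw [if_neg hc]

private lemma outDegF_flip_split [Fintype V] [DecidableEq V] {H : SimpleGraph V}
    (t : GraphOrientation H) {P1 P2 : List V} {x : V}
    (hnd : (P1 ++ x :: P2).Nodup)
    (hch : List.Chain' (fun a b => t.dir a b = true) (P1 ++ x :: P2)) :
    outDegF (flipDir t.dir (P1 ++ x :: P2)) x + (if P2 = [] then 0 else 1)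
      = outDegF t.dir x + (if P1 = [] then 0 else 1) := by
  classical
  unfold outDegF
  cases P2 with
  | nil =>
    rcases List.eq_nil_or_concat P1 with rfl | ⟨L, r, rfl⟩
    · have hset : Finset.univ.filter (fun w => flipDir t.dir ([] ++ x :: []) x w = true)
           = Finset.univ.filter (fun w => t.dir x w = true) := by
        apply Finset.filter_congr; intro y _
        rw [flip_val t.dir hnd y]
        simp
      rw [hset]
    · rw [List.concat_eq_append] at hnd hch ⊢
      have hrx : t.dir r x = true := chain'_pair hch
        ((zt_pred_iff hnd).mpr (by rw [List.getLast?_concat]))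
      have hxr : t.dir x r = false := rev_false t hrx
      have hset : Finset.univ.filter (fun w => flipDir t.dir ((L ++ [r]) ++ x :: []) x w = true)
           = insert r (Finset.univ.filter (fun w => t.dir x w = true)) := by
        ext y
        simp only [Finset.mem_filter, Finset.mem_insert, Finset.mem_univ, true_and]
        rw [flip_val t.dir hnd y]
        by_cases hy : y = r
        · subst hy
          rw [if_pos (Or.inr (by rw [List.getLast?_concat]))]
          simp [hrx]
        · rw [if_neg (by
            rintro (h | h)
            · simp at h
            · rw [List.getLast?_concat] at h
              exact hy (Option.some.inj h).symm)]
          constructor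
          · intro h; exact Or.inr h
          · rintro (h | h)
            · exact absurd h hy
            · exact h
      rw [hset, Finset.card_insert_of_notMem (by simp [hxr])]
      simp
  | cons c t2 =>
    have hxc : t.dir x c = true := chain'_pair hch (zt_adj (l1 := P1) (l2 := t2))
    have hcx : t.dir c x = false := rev_false t hxc
    have hcA : c ∈ Finset.univ.filter (fun w => t.dir x w = true) := by simp [hxc]
    rcases List.eq_nil_or_concat P1 with rfl | ⟨L, r, rfl⟩
    · have hset : Finset.univ.filter (fun w => flipDir t.dir ([] ++ x :: c :: t2) x w = true)
           = (Finset.univ.filter (fun w => t.dir x w = true)).erase c := by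
        ext y
        simp only [Finset.mem_filter, Finset.mem_univ, true_and, Finset.mem_erase]
        rw [flip_val t.dir hnd y]
        by_cases hy : y = c
        · subst hy
          rw [if_pos (Or.inl (by rfl))]
          simp [hcx]
        · rw [if_neg (by
            rintro (h | h)
            · exact hy (Option.some.inj h).symm
            · simp at h)]
          constructor
          · intro h; exact ⟨hy, h⟩
          · intro h; exact h.2
      rw [hset]
      have := Finset.card_erase_add_one hcA
      have e1 : (if (c :: t2 : List V) = [] then 0 else 1) = 1 := by simp
      have e2 : (if ([] : List V) = [] then 0 else 1) = 0 := by simp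
      rw [e1, e2]
      omega
    · rw [List.concat_eq_append] at hnd hch ⊢
      have hrx : t.dir r x = true := chain'_pair hch
        ((zt_pred_iff hnd).mpr (by rw [List.getLast?_concat]))
      have hxr : t.dir x r = false := rev_false t hrx
      have hrc : r ≠ c := by
        rw [List.nodup_append'] at hnd
        intro h
        exact hnd.2.2 (show r ∈ L ++ [r] by simp) (show r ∈ x :: c :: t2 by rw [h]; simp)
      have hset : Finset.univ.filter (fun w => flipDir t.dir ((L ++ [r]) ++ x :: c :: t2) x w = true)
           = insert r ((Finset.univ.filter (fun w => t.dir x w = true)).erase c) := by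
        ext y
        simp only [Finset.mem_filter, Finset.mem_univ, true_and, Finset.mem_erase,
          Finset.mem_insert]
        rw [flip_val t.dir hnd y]
        by_cases hy : y = r
        · subst hy
          rw [if_pos (Or.inr (by rw [List.getLast?_concat]))]
          simp [hrx]
        · by_cases hy2 : y = c
          · subst hy2
            rw [if_pos (Or.inl (by simp))]
            simp [hcx, hy]
          · rw [if_neg (by
              rintro (h | h)
              · exact hy2 (Option.some.inj h).symm
              · rw [List.getLast?_concat] at h
                exact hy (Option.some.inj h).symm)]
            constructor
            · intro h; exact Or.inr ⟨hy2, h⟩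
            · rintro (h | h)
              · exact absurd h hy
              · exact h.2
      rw [hset, Finset.card_insert_of_notMem (by simp [hxr])]
      have := Finset.card_erase_add_one hcA
      have e1 : (if (c :: t2 : List V) = [] then 0 else 1) = 1 := by simp
      have e2 : (if (L ++ [r] : List V) = [] then 0 else 1) = 1 := by simp
      rw [e1, e2]
      omega

end OrientAux

/-- After inserting `{u,v}` (directed `(u,v)`) into an Invariant-1
orientation, there is an orientation of `G + {u,v}` satisfying Invariant 1 which is
either `G̃` itself or obtained from `G̃` by flipping a single improving path starting
at `u`: at most one improving-path flip restores an optimal Invariant-1 orientation. -/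
theorem insert_one_flip_suffices {V : Type*} [Fintype V] [DecidableEq V]
    {G : SimpleGraph V} (o : GraphOrientation G) (hinv : Invariant1 o)
    (u v : V) (hne : u ≠ v) (hE : ¬ G.Adj u v) (hdeg : o.outDeg u ≤ o.outDeg v)
    (ot : GraphOrientation (addE G u v))
    (hot : ∀ a b, ot.dir a b = true ↔ (o.dir a b = true ∨ (a = u ∧ b = v))) :
    ∃ o' : GraphOrientation (addE G u v), Invariant1 o' ∧
      (o'.dir = ot.dir ∨
        ∃ P w, IsPathFrom ot P u w ∧ ot.outDeg w + 1 < ot.outDeg u ∧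
          o'.dir = flipDir ot.dir P) := by
  classical
  set d := o.outDeg with hd_def
  -- basic boolean facts
  have h_ouv : o.dir u v = false := by
    cases h : o.dir u v
    · rfl
    · exact absurd (o.dir_adj u v h) hE
  have h_ovu : o.dir v u = false := by
    cases h : o.dir v u
    · rfl
    · exact absurd (o.dir_adj v u h).symm hE
  have hup_dir : ∀ a b, o.dir a b = true → ot.dir a b = true := fun a b h =>
    (hot a b).mpr (Or.inl h)
  have hdown_dir : ∀ a b, ot.dir a b = true → ¬(a = u ∧ b = v) → o.dir a b = true := by
    intro a b h hn
    rcases (hot a b).mp h with h | h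
    · exact h
    · exact absurd h hn
  have hotvu : ot.dir v u = false := by
    cases h : ot.dir v u
    · rfl
    · rcases (hot v u).mp h with h2 | h2
      · rw [h_ovu] at h2; exact absurd h2 (by simp)
      · exact absurd h2.1 hne.symm
  -- out-degrees in ot
  have htd : ∀ x, ot.outDeg x = d x + (if x = u then 1 else 0) := by
    intro x
    by_cases hx : x = u
    · subst hx
      show outDegF ot.dir x = outDegF o.dir x + _
      unfold outDegF
      have hset : Finset.univ.filter (fun y => ot.dir x y = true)
          = insert v (Finset.univ.filter (fun y => o.dir x y = true)) := by
        ext y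
        simp only [Finset.mem_filter, Finset.mem_univ, true_and, Finset.mem_insert]
        rw [hot]
        constructor
        · rintro (h | h)
          · exact Or.inr h
          · exact Or.inl h.2
        · rintro (h | h)
          · exact Or.inr ⟨rfl, h⟩
          · exact Or.inl h
      rw [hset, Finset.card_insert_of_notMem (by simp [h_ouv]), if_pos rfl]
    · show outDegF ot.dir x = outDegF o.dir x + _
      unfold outDegF
      rw [if_neg hx, Nat.add_zero]
      congr 1
      apply Finset.filter_congr
      intro y _
      rw [hot]
      constructor
      · rintro (h | h)
        · exact h
        · exact absurd h.1 hx
      · exact Or.inl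
  -- converting chains
  have hchain_up : ∀ l : List V, List.Chain' (fun a b => o.dir a b = true) l →
      List.Chain' (fun a b => ot.dir a b = true) l := by
    intro l hl
    exact List.IsChain.imp (fun a b h => hup_dir a b h) hl
  -- Lemma A: every ot-path from u ends at a vertex x with d u ≤ d x + 1
  have hA : ∀ p x, IsPathFrom ot p u x → d u ≤ d x + 1 := by
    rintro p x ⟨⟨hnd, hlen, hch⟩, hhd, hlast⟩
    obtain ⟨q, rfl⟩ : ∃ q, p = u :: q := by
      cases p with
      | nil => simp at hhd
      | cons c q => exact ⟨q, by rw [show c = u by simpa using hhd]⟩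
    cases q with
    | nil => simp at hlen
    | cons y q' =>
      by_cases hyv : y = v
      · cases q' with
        | nil =>
          have hx : y = x := by simpa using hlast
          rw [← hx, hyv]
          exact le_trans hdeg (Nat.le_succ _)
        | cons z q'' =>
          have hch2 : List.Chain' (fun a b => o.dir a b = true) (y :: z :: q'') := by
            apply chain'_of_pairs
            intro c e hm
            have hcd : c ∈ (y :: z :: q'').dropLast := zt_fst_mem_dropLast hm
            have hcu : c ≠ u := by
              intro h
              rw [h] at hcd
              exact (List.nodup_cons.1 hnd).1
                (List.dropLast_subset _ (by exact hcd))
            exact hdown_dir c e (chain'_pair (List.isChain_cons_cons.1 hch).2 hm)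
              (fun hc => hcu hc.1)
          have hpath : IsPathFrom o (y :: z :: q'') y x := by
            refine ⟨⟨(List.nodup_cons.1 hnd).2, by simp, hch2⟩, rfl, ?_⟩
            rw [← hlast]
            exact (List.getLast?_cons_cons).symm
          calc d u ≤ d v := hdeg
            _ = d y := by rw [hyv]
            _ ≤ d x + 1 := hinv _ _ _ hpath
      · -- no new edge used: whole path is an o-path
        have hch2 : List.Chain' (fun a b => o.dir a b = true) (u :: y :: q') := by
          apply chain'_of_pairs
          intro c e hm
          refine hdown_dir c e (chain'_pair hch hm) ?_
          rintro ⟨hc, he⟩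
          rw [hc, he] at hm
          have : v = y := zt_fst_unique hnd hm (zt_adj (l1 := []) (l2 := q'))
          exact hyv this.symm
        exact hinv _ _ _ ⟨⟨hnd, hlen, hch2⟩, hhd, hlast⟩
  by_cases hInv1 : Invariant1 ot
  · exact ⟨ot, hInv1, Or.inl rfl⟩
  -- Step 1: there is an improving ot-path starting at u
  have hstep1 : ∃ p x, IsPathFrom ot p u x ∧ d x < d u := by
    unfold Invariant1 at hInv1
    push_neg at hInv1
    obtain ⟨p, a, b, hpath, himp⟩ := hInv1
    obtain ⟨⟨hnd, hlen, hch⟩, hhd, hlast⟩ := hpath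
    have hpne : p ≠ [] := by intro h; rw [h] at hhd; simp at hhd
    have hab : a ≠ b := head_ne_last hnd hlen hhd hlast
    by_cases hau : a = u
    · refine ⟨p, b, ⟨⟨hnd, hlen, hch⟩, by rw [← hau]; exact hhd, hlast⟩, ?_⟩
      have h1 := htd a
      have h2 := htd b
      rw [if_pos hau] at h1
      rw [if_neg (fun h => hab (by rw [hau, h]))] at h2
      rw [hau] at h1 himp
      omega
    · by_cases hm : (u, v) ∈ p.zip p.tail
      · -- path passes through the new edge; take the suffix from u
        obtain ⟨l1, l2, hsplit⟩ := List.append_of_mem (zt_fst_mem hm)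
        subst hsplit
        have hl1ne : l1 ≠ [] := by
          intro h
          subst h
          apply hau
          simpa using hhd.symm
        have hl2ne : l2 ≠ [] := by
          intro h
          subst h
          have hgl : (l1 ++ [u]).getLast (by simp) = u := by
            rw [List.getLast_append]; simp
          apply zt_not_last hnd (show l1 ++ [u] ≠ [] by simp) (b := v)
          rw [hgl]
          exact hm
        have hbu : b ≠ u := by
          intro h
          have h2 := List.getLast?_eq_getLast (l := l1 ++ u :: l2) (by simp)
          rw [hlast] at h2
          have hbl : b = (l1 ++ u :: l2).getLast (by simp) := Option.some.inj h2
          rw [h] at hbl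
          apply zt_not_last hnd (show l1 ++ u :: l2 ≠ [] by simp) (b := v)
          rw [← hbl]
          exact hm
        have hchsplit := List.isChain_append.mp hch
        have hndsplit := List.nodup_append'.mp hnd
        -- the suffix u :: l2 is an ot-path from u to b
        have hsuffpath : IsPathFrom ot (u :: l2) u b := by
          refine ⟨⟨hndsplit.2.1, ?_, hchsplit.2.1⟩, rfl, ?_⟩
          · cases l2 with
            | nil => exact absurd rfl hl2ne
            | cons c q => simp
          · rw [← hlast, List.getLast?_append]
            cases l2 with
            | nil => exact absurd rfl hl2ne
            | cons c q =>
              rw [List.getLast?_eq_getLast (l := u :: c :: q) (by simp)]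
              simp
        -- the prefix l1 ++ [u] is an o-path from a to u
        have hprefchain : List.Chain' (fun a b => o.dir a b = true) (l1 ++ [u]) := by
          apply chain'_of_pairs
          intro c e hmm
          have hcmem : c ∈ l1 := by
            have := zt_fst_mem_dropLast hmm
            simpa using this
          have hcu : c ≠ u := by
            intro h
            subst h
            exact (List.disjoint_right.mp hndsplit.2.2 (List.mem_cons_self)) hcmem
          have : (c, e) ∈ (l1 ++ u :: l2).zip (l1 ++ u :: l2).tail := by
            have he : l1 ++ u :: l2 = (l1 ++ [u]) ++ l2 := by simp
            rw [he]
            exact zt_append_left _ hmm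
          exact hdown_dir c e (chain'_pair hch this) (fun hc => hcu hc.1)
        have hprefpath : IsPathFrom o (l1 ++ [u]) a u := by
          refine ⟨⟨?_, ?_, hprefchain⟩, ?_, by rw [List.getLast?_concat]⟩
          · have hnd' : ((l1 ++ [u]) ++ l2).Nodup := by
              rw [List.append_assoc]
              exact hnd
            exact (List.nodup_append'.mp hnd').1
          · cases l1 with
            | nil => exact absurd rfl hl1ne
            | cons c q => simp
          · rw [← hhd]
            cases l1 with
            | nil => exact absurd rfl hl1ne
            | cons c q => simp
        have hda : d a ≤ d u + 1 := hinv _ _ _ hprefpath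
        have h1 := htd a
        have h2 := htd b
        rw [if_neg hau] at h1
        rw [if_neg hbu] at h2
        exact ⟨u :: l2, b, hsuffpath, by omega⟩
      · -- no new edge: p is an o-path, contradicting Invariant 1 for o
        exfalso
        have hch2 : List.Chain' (fun a b => o.dir a b = true) p := by
          apply chain'_of_pairs
          intro c e hmm
          refine hdown_dir c e (chain'_pair hch hmm) ?_
          rintro ⟨rfl, rfl⟩
          exact hm hmm
        have hthis := hinv _ _ _ ⟨⟨hnd, hlen, hch2⟩, hhd, hlast⟩
        rw [← hd_def] at hthis
        have h1 := htd a
        have h2 : d b ≤ ot.outDeg b := by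
          rw [htd b]
          split <;> omega
        rw [if_neg hau] at h1
        omega
  -- Selection of the path P to flip
  obtain ⟨P, w, hPot, hwlt, hlow, hBr⟩ :
      ∃ P w, IsPathFrom ot P u w ∧ d w < d u ∧
        (∀ P1 x P2, P = P1 ++ x :: P2 → P2 ≠ [] → d u ≤ d x) ∧
        (List.Chain' (fun a b => o.dir a b = true) P ∨
          ∀ q x, IsPathFrom o q u x → d u ≤ d x) := by
    by_cases hOldEx : ∃ n, ∃ (p : List V) (x : V),
        IsPathFrom o p u x ∧ d x < d u ∧ p.length = n
    · obtain ⟨P, x, h1, h2, h3⟩ := Nat.find_spec hOldEx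
      obtain ⟨⟨hnd1, hlen1, hch1⟩, hhd1, hlast1⟩ := h1
      refine ⟨P, x, ⟨⟨hnd1, hlen1, hchain_up _ hch1⟩, hhd1, hlast1⟩, h2, ?_, Or.inl hch1⟩
      intro P1 y P2 hsplit hP2
      by_contra hlt
      push_neg at hlt
      cases P1 with
      | nil =>
        have : y = u := by
          rw [hsplit] at hhd1
          simpa using hhd1
        rw [this] at hlt
        omega
      | cons c1 q1 =>
        have hsplit2 : P = ((c1 :: q1) ++ [y]) ++ P2 := by
          rw [hsplit, List.append_assoc]
          rfl
        have hch' : List.Chain' (fun a b => o.dir a b = true) ((c1 :: q1) ++ [y]) := by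
          rw [hsplit2] at hch1
          exact (List.isChain_append.mp hch1).1
        have hnd' : ((c1 :: q1) ++ [y]).Nodup := by
          rw [hsplit2] at hnd1
          exact (List.nodup_append'.mp hnd1).1
        have hhd' : ((c1 :: q1) ++ [y]).head? = some u := by
          rw [hsplit] at hhd1
          simpa using hhd1
        have hpath' : IsPathFrom o ((c1 :: q1) ++ [y]) u y :=
          ⟨⟨hnd', by simp, hch'⟩, hhd', by rw [List.getLast?_concat]⟩
        have hlenlt : ((c1 :: q1) ++ [y]).length < Nat.find hOldEx := by
          rw [← h3, hsplit]
          cases P2 with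
          | nil => exact absurd rfl hP2
          | cons c2 q2 => simp
        exact Nat.find_min hOldEx hlenlt ⟨(c1 :: q1) ++ [y], y, hpath', hlt, rfl⟩
    · have hImpEx : ∃ n, ∃ (p : List V) (x : V),
          IsPathFrom ot p u x ∧ d x < d u ∧ p.length = n := by
        obtain ⟨p, x, h1, h2⟩ := hstep1
        exact ⟨p.length, p, x, h1, h2, rfl⟩
      have hNoOld : ∀ q x, IsPathFrom o q u x → d u ≤ d x := by
        intro q x h
        by_contra hlt
        push_neg at hlt
        exact hOldEx ⟨q.length, q, x, h, hlt, rfl⟩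
      obtain ⟨P, x, h1, h2, h3⟩ := Nat.find_spec hImpEx
      obtain ⟨⟨hnd1, hlen1, hch1⟩, hhd1, hlast1⟩ := h1
      refine ⟨P, x, ⟨⟨hnd1, hlen1, hch1⟩, hhd1, hlast1⟩, h2, ?_, Or.inr hNoOld⟩
      intro P1 y P2 hsplit hP2
      by_contra hlt
      push_neg at hlt
      cases P1 with
      | nil =>
        have : y = u := by
          rw [hsplit] at hhd1
          simpa using hhd1
        rw [this] at hlt
        omega
      | cons c1 q1 =>
        have hsplit2 : P = ((c1 :: q1) ++ [y]) ++ P2 := by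
          rw [hsplit, List.append_assoc]
          rfl
        have hch' : List.Chain' (fun a b => ot.dir a b = true) ((c1 :: q1) ++ [y]) := by
          rw [hsplit2] at hch1
          exact (List.isChain_append.mp hch1).1
        have hnd' : ((c1 :: q1) ++ [y]).Nodup := by
          rw [hsplit2] at hnd1
          exact (List.nodup_append'.mp hnd1).1
        have hhd' : ((c1 :: q1) ++ [y]).head? = some u := by
          rw [hsplit] at hhd1
          simpa using hhd1
        have hpath' : IsPathFrom ot ((c1 :: q1) ++ [y]) u y :=
          ⟨⟨hnd', by simp, hch'⟩, hhd', by rw [List.getLast?_concat]⟩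
        have hlenlt : ((c1 :: q1) ++ [y]).length < Nat.find hImpEx := by
          rw [← h3, hsplit]
          cases P2 with
          | nil => exact absurd rfl hP2
          | cons c2 q2 => simp
        exact Nat.find_min hImpEx hlenlt ⟨(c1 :: q1) ++ [y], y, hpath', hlt, rfl⟩
  obtain ⟨⟨hndP, hlenP, hchP⟩, hheadP, hlastP⟩ := hPot
  have hwD : d w + 1 = d u := by
    have := hA P w ⟨⟨hndP, hlenP, hchP⟩, hheadP, hlastP⟩
    omega
  have hwu : w ≠ u := by
    intro h
    rw [h] at hwD
    omega
  have humem : u ∈ P := by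
    cases P with
    | nil => simp at hheadP
    | cons c q =>
      have : c = u := by simpa using hheadP
      rw [← this]
      exact List.mem_cons_self
  -- u only occurs at the head: if P = P1 ++ x :: P2 with P1 ≠ [] then x ≠ u and u ∈ P1
  have huP1 : ∀ P1 x P2, P = P1 ++ x :: P2 → P1 ≠ [] → u ∈ P1 ∧ u ∉ x :: P2 := by
    intro P1 x P2 hsplit hP1
    cases P1 with
    | nil => exact absurd rfl hP1
    | cons c1 q1 =>
      have hc1 : c1 = u := by
        rw [hsplit] at hheadP
        simpa using hheadP
      have hu1 : u ∈ c1 :: q1 := by rw [hc1]; exact List.mem_cons_self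
      refine ⟨hu1, ?_⟩
      have hnd2 := hndP
      rw [hsplit, List.nodup_append'] at hnd2
      exact fun hmem => hnd2.2.2 hu1 hmem
  -- upper bound for interior vertices
  have hup : ∀ P1 x P2, P = P1 ++ x :: P2 → P2 ≠ [] → d x ≤ d u := by
    intro P1 x P2 hsplit hP2
    by_cases hxu : x = u
    · rw [hxu]
    · have hP1 : P1 ≠ [] := by
        intro h
        rw [h] at hsplit
        rw [hsplit] at hheadP
        exact hxu (by simpa using hheadP)
      have hunotin := (huP1 P1 x P2 hsplit hP1).2
      have hchx : List.Chain' (fun a b => o.dir a b = true) (x :: P2) := by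
        apply chain'_of_pairs
        intro c e hm
        have hcm : c ∈ x :: P2 := zt_fst_mem hm
        have : (c, e) ∈ P.zip P.tail := by
          rw [hsplit]
          exact zt_append_right _ hm
        exact hdown_dir c e (chain'_pair hchP this)
          (fun hc => hunotin (hc.1 ▸ hcm))
      have hlastx : (x :: P2).getLast? = some w := by
        rw [hsplit, List.getLast?_append] at hlastP
        rw [List.getLast?_eq_getLast (l := x :: P2) (by simp)] at hlastP ⊢
        simpa using hlastP
      have hndx : (x :: P2).Nodup := by
        have hnd2 := hndP
        rw [hsplit, List.nodup_append'] at hnd2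
        exact hnd2.2.1
      have hlenx : 2 ≤ (x :: P2).length := by
        cases P2 with
        | nil => exact absurd rfl hP2
        | cons c2 q2 => simp
      have := hinv _ _ _ ⟨⟨hndx, hlenx, hchx⟩, rfl, hlastx⟩
      rw [← hd_def] at this
      omega
  -- out-degrees after flipping
  have hdegmem : ∀ x ∈ P, outDegF (flipDir ot.dir P) x = d u := by
    intro x hx
    obtain ⟨P1, P2, hsplit⟩ := List.append_of_mem hx
    have hnds : (P1 ++ x :: P2).Nodup := by rw [← hsplit]; exact hndP
    have hchs : List.Chain' (fun a b => ot.dir a b = true) (P1 ++ x :: P2) := by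
      rw [← hsplit]; exact hchP
    have hcalc := outDegF_flip_split ot hnds hchs
    rw [← hsplit] at hcalc
    cases P2 with
    | nil =>
      have hxw : x = w := by
        rw [hsplit, List.getLast?_concat] at hlastP
        exact Option.some.inj hlastP
      have hP1 : P1 ≠ [] := by
        intro h
        rw [h] at hsplit
        rw [hsplit] at hlenP
        simp at hlenP
      have htdx := htd x
      unfold GraphOrientation.outDeg at htdx
      rw [if_neg (by rw [hxw]; exact hwu)] at htdx
      rw [if_pos rfl, if_neg hP1] at hcalc
      rw [hxw] at htdx
      rw [hxw] at hcalc ⊢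
      omega
    | cons c2 q2 =>
      have hne2 : (c2 :: q2 : List V) ≠ [] := by simp
      rw [if_neg hne2] at hcalc
      by_cases hP1 : P1 = []
      · have hxu : x = u := by
          rw [hP1] at hsplit
          rw [hsplit] at hheadP
          simpa using hheadP
        rw [if_pos hP1] at hcalc
        have htdx := htd x
        unfold GraphOrientation.outDeg at htdx
        rw [if_pos hxu] at htdx
        rw [hxu] at htdx hcalc ⊢
        omega
      · have hxu : x ≠ u := by
          intro h
          exact (huP1 P1 x (c2 :: q2) hsplit hP1).2 (h ▸ List.mem_cons_self)
        have hdx : d x = d u :=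
          le_antisymm (hup P1 x (c2 :: q2) hsplit hne2) (hlow P1 x (c2 :: q2) hsplit hne2)
        have htdx := htd x
        unfold GraphOrientation.outDeg at htdx
        rw [if_neg hxu] at htdx
        rw [if_neg hP1] at hcalc
        omega
  have hdegnot : ∀ x, x ∉ P → outDegF (flipDir ot.dir P) x = d x := by
    intro x hx
    rw [outDegF_flip_not_mem ot.dir hx]
    have htdx := htd x
    rw [if_neg (fun h => hx (by rw [h]; exact humem))] at htdx
    show ot.outDeg x = d x
    omega
  refine ⟨flipOrient ot P, ?_, Or.inr ⟨P, w, ⟨⟨hndP, hlenP, hchP⟩, hheadP, hlastP⟩, ?_, rfl⟩⟩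
  swap
  · have h1 := htd w
    have h2 := htd u
    rw [if_neg hwu] at h1
    rw [if_pos rfl] at h2
    omega
  -- Main goal: Invariant 1 for the flipped orientation
  intro Q a b hQ
  obtain ⟨⟨hndQ, hlenQ, hchQf⟩, hheadQ, hlastQ⟩ := hQ
  have hchQ : List.Chain' (fun a b => flipDir ot.dir P a b = true) Q := hchQf
  show outDegF (flipDir ot.dir P) a ≤ outDegF (flipDir ot.dir P) b + 1
  by_contra hcon
  push_neg at hcon
  -- basic translation lemmas for flipped edges
  have hT1 : ∀ x y, x ∉ P → flipDir ot.dir P x y = true → o.dir x y = true := by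
    intro x y hx h
    unfold flipDir at h
    rw [if_neg (by
      rintro (hm | hm)
      · exact hx (zt_fst_mem hm)
      · exact hx (zt_snd_mem' hm))] at h
    exact hdown_dir x y h (fun hc => hx (hc.1 ▸ humem))
  have hT2 : ∀ x y, y ∉ P → flipDir ot.dir P x y = true → ot.dir x y = true := by
    intro x y hy h
    unfold flipDir at h
    rw [if_neg (by
      rintro (hm | hm)
      · exact hy (zt_snd_mem' hm)
      · exact hy (zt_fst_mem hm))] at h
    exact h
  have hOffChain : ∀ (s : V) (l : List V), (∀ z ∈ l, z ∉ P) →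
      List.Chain' (fun a b => flipDir ot.dir P a b = true) (s :: l) →
      List.Chain' (fun a b => ot.dir a b = true) (s :: l) := by
    intro s l hl hc
    apply chain'_of_pairs
    intro c e hm
    have he : e ∈ l := zt_snd_mem hm
    exact hT2 c e (hl e he) (chain'_pair hc hm)
  have hOffChainO : ∀ (l : List V), (∀ z ∈ l, z ∉ P) →
      List.Chain' (fun a b => flipDir ot.dir P a b = true) l →
      List.Chain' (fun a b => o.dir a b = true) l := by
    intro l hl hc
    apply chain'_of_pairs
    intro c e hm
    exact hT1 c e (hl c (zt_fst_mem hm)) (chain'_pair hc hm)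
  have hPdeg : ∀ x ∈ P, d x ≤ d u := by
    intro x hx
    obtain ⟨P1, P2, hsplit⟩ := List.append_of_mem hx
    cases P2 with
    | nil =>
      have hxw : x = w := by
        rw [hsplit, List.getLast?_concat] at hlastP
        exact Option.some.inj hlastP
      rw [hxw]
      omega
    | cons c2 q2 => exact hup P1 x (c2 :: q2) hsplit (by simp)
  have hbQ : b ∈ Q := by
    cases Q with
    | nil => simp at hheadQ
    | cons c q =>
      have h2 := List.getLast?_eq_getLast (l := c :: q) (by simp)
      rw [hlastQ] at h2
      rw [Option.some.inj h2]
      exact List.getLast_mem _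
  obtain ⟨Qt, rfl⟩ : ∃ t, Q = a :: t := by
    cases Q with
    | nil => simp at hheadQ
    | cons c q => exact ⟨q, by rw [show c = a by simpa using hheadQ]⟩
  by_cases hQP : ∃ x ∈ a :: Qt, x ∈ P
  · -- Step I: the end b satisfies d u ≤ deg'(b) + 1
    have hBb : d u ≤ outDegF (flipDir ot.dir P) b + 1 := by
      by_cases hbP : b ∈ P
      · rw [hdegmem b hbP]
        omega
      · obtain ⟨l1, sv, l2, hsplitQ, hsP, hl2⟩ := splitLast (· ∈ P) hQP
        have hl2ne : l2 ≠ [] := by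
          intro h
          rw [h] at hsplitQ
          rw [hsplitQ, List.getLast?_concat] at hlastQ
          exact hbP ((Option.some.inj hlastQ) ▸ hsP)
        obtain ⟨c, l2', rfl⟩ : ∃ c l2'', l2 = c :: l2'' := by
          cases l2 with
          | nil => exact absurd rfl hl2ne
          | cons c q => exact ⟨c, q, rfl⟩
        have hchQ2 : List.Chain' (fun a b => flipDir ot.dir P a b = true) (sv :: c :: l2') := by
          rw [hsplitQ] at hchQ
          exact (List.isChain_append.mp hchQ).2.1
        have hndQ2 : (sv :: c :: l2').Nodup := by
          have := hndQ
          rw [hsplitQ, List.nodup_append'] at this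
          exact this.2.1
        have hlast2 : (sv :: c :: l2').getLast? = some b := by
          rw [hsplitQ, getLast?_append_right (by simp)] at hlastQ
          exact hlastQ
        have hedge1 : flipDir ot.dir P sv c = true := (List.isChain_cons_cons.mp hchQ2).1
        have hot1 : ot.dir sv c = true := hT2 sv c (hl2 c (List.mem_cons_self)) hedge1
        rcases (hot sv c).mp hot1 with hsc | ⟨hsu, hcv⟩
        · -- the exit edge is an original edge: build an ot-path from u to b
          obtain ⟨P1, P2, hsplitP⟩ := List.append_of_mem hsP
          have hchPs : List.Chain' (fun a b => ot.dir a b = true) (P1 ++ sv :: P2) := by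
            rw [← hsplitP]; exact hchP
          have hPparts := List.isChain_append.mp hchPs
          have hchR : List.Chain' (fun a b => ot.dir a b = true) (P1 ++ sv :: c :: l2') := by
            refine List.isChain_append.mpr ?_
            refine ⟨hPparts.1, hOffChain sv (c :: l2') hl2 hchQ2, ?_⟩
            intro x hx y hy
            exact hPparts.2.2 x hx y (by simpa using hy)
          have hndR : (P1 ++ sv :: c :: l2').Nodup := by
            rw [List.nodup_append']
            have hndPs : (P1 ++ sv :: P2).Nodup := by rw [← hsplitP]; exact hndP
            rw [List.nodup_append'] at hndPs
            refine ⟨hndPs.1, hndQ2, ?_⟩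
            intro z hz hz2
            rcases List.mem_cons.1 hz2 with rfl | hz2
            · exact hndPs.2.2 hz (List.mem_cons_self)
            · exact hl2 z hz2 (by rw [hsplitP]; exact List.mem_append_left _ hz)
          have hheadR : (P1 ++ sv :: c :: l2').head? = some u := by
            rw [List.head?_append]
            rw [hsplitP, List.head?_append] at hheadP
            exact hheadP
          have hlastR : (P1 ++ sv :: c :: l2').getLast? = some b := by
            rw [getLast?_append_right (by simp)]
            exact hlast2
          have := hA (P1 ++ sv :: c :: l2') b
            ⟨⟨hndR, by simp; omega, hchR⟩, hheadR, hlastR⟩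
          rw [hdegnot b hbP]
          omega
        · -- the exit edge is the new edge (u,v)
          have hvnP : v ∉ P := by
            rw [← hcv]
            exact fun hh => hl2 c (List.mem_cons_self) hh
          cases l2' with
          | nil =>
            have hbc : c = b := by simpa using hlast2
            rw [hdegnot b hbP, ← hbc, hcv]
            omega
          | cons c3 q3 =>
            have hcho : List.Chain' (fun a b => o.dir a b = true) (c :: c3 :: q3) := by
              apply hOffChainO
              · intro z hz
                exact hl2 z hz
              · exact (List.isChain_cons_cons.mp hchQ2).2
            have hpatho : IsPathFrom o (c :: c3 :: q3) c b := by
              refine ⟨⟨(List.nodup_cons.1 hndQ2).2, by simp, hcho⟩, rfl, ?_⟩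
              rw [← hlast2]
              exact (List.getLast?_cons_cons).symm
            have := hinv _ _ _ hpatho
            rw [← hd_def] at this
            rw [hdegnot b hbP]
            rw [hcv] at this
            omega
    -- Step II: analysis at the start a
    have haP : a ∉ P := by
      intro h
      rw [hdegmem a h] at hcon
      omega
    have hda : outDegF (flipDir ot.dir P) a = d a := hdegnot a haP
    obtain ⟨m1, sv, m2, hsplitQ, hsP, hm1⟩ := splitFirst (· ∈ P) hQP
    have hm1ne : m1 ≠ [] := by
      intro h
      rw [h] at hsplitQ
      simp only [List.nil_append] at hsplitQ
      apply haP
      rw [show a = sv by injection hsplitQ]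
      exact hsP
    -- the prefix of Q up to sv is an o-path from a to sv
    have hchpre : List.Chain' (fun a b => o.dir a b = true) (m1 ++ [sv]) := by
      apply chain'_of_pairs
      intro c e hm
      have hcm : c ∈ m1 := by
        have := zt_fst_mem_dropLast hm
        simpa using this
      have hmQ : (c, e) ∈ ((a :: Qt).zip (a :: Qt).tail) := by
        rw [hsplitQ, show m1 ++ sv :: m2 = (m1 ++ [sv]) ++ m2 by simp]
        exact zt_append_left _ hm
      exact hT1 c e (hm1 c hcm) (chain'_pair hchQ hmQ)
    have hndpre : (m1 ++ [sv]).Nodup := by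
      have h2 : ((m1 ++ [sv]) ++ m2).Nodup := by
        rw [show (m1 ++ [sv]) ++ m2 = m1 ++ sv :: m2 by simp, ← hsplitQ]
        exact hndQ
      exact (List.nodup_append'.mp h2).1
    have hheadpre : (m1 ++ [sv]).head? = some a := by
      rw [head?_append_left hm1ne]
      rw [hsplitQ, head?_append_left hm1ne] at hheadQ
      exact hheadQ
    have hpre : d a ≤ d sv + 1 := by
      have := hinv _ _ _ ⟨⟨hndpre, by cases m1 with
        | nil => exact absurd rfl hm1ne
        | cons c q => simp, hchpre⟩, hheadpre, by rw [List.getLast?_concat]⟩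
      rw [← hd_def] at this
      exact this
    have hdsv : d sv ≤ d u := hPdeg sv hsP
    have hbP : b ∉ P := by
      intro h
      rw [hdegmem b h, hda] at hcon
      omega
    have hdb : outDegF (flipDir ot.dir P) b = d b := hdegnot b hbP
    rw [hda] at hcon
    rw [hdb] at hcon hBb
    obtain ⟨P1, P2, hsplitP⟩ := List.append_of_mem hsP
    by_cases hcase : sv = u ∧ P.tail.head? = some v
    · obtain ⟨hsvu, hPv⟩ := hcase
      obtain ⟨Pt, hPt⟩ : ∃ t, P = u :: t := by
        cases P with
        | nil => simp at hheadP
        | cons c q => exact ⟨q, by rw [show c = u by simpa using hheadP]⟩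
      obtain ⟨P3, hP3⟩ : ∃ t3, Pt = v :: t3 := by
        rw [hPt] at hPv
        cases Pt with
        | nil => simp at hPv
        | cons c q => exact ⟨q, by rw [show c = v by simpa using hPv]⟩
      have hndP' : (u :: v :: P3).Nodup := by rw [← hP3, ← hPt]; exact hndP
      have hNoOld : ∀ q x, IsPathFrom o q u x → d u ≤ d x := by
        rcases hBr with hold | hno
        · exfalso
          rw [hPt, hP3] at hold
          have h9 : o.dir u v = true := (List.isChain_cons_cons.mp hold).1
          rw [h_ouv] at h9
          simp at h9
        · exact hno
      have hoptmem : ∀ (z1 z2 : V), z1 ∈ (some z2 : Option V) → z1 = z2 :=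
        fun z1 z2 h => (Option.some.inj h).symm
      -- every flipped edge out of u is an original edge
      have hedge_u : ∀ y, flipDir ot.dir P u y = true → o.dir u y = true := by
        intro y h
        unfold flipDir at h
        by_cases hcnd : (u, y) ∈ P.zip P.tail ∨ (y, u) ∈ P.zip P.tail
        · exfalso
          rw [if_pos hcnd] at h
          rcases hcnd with hm | hm
          · have hyv2 : y = v := by
              rw [hPt, hP3] at hm
              have hiff := zt_succ_iff (P1 := ([] : List V)) (x := u) (y := y)
                (P2 := v :: P3) (by simpa using hndP')
              simp only [List.nil_append] at hiff
              have := hiff.mp hm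
              simpa using this.symm
            rw [hyv2, hotvu] at h
            simp at h
          · rw [hPt, hP3] at hm
            exact zt_not_head hndP' hm
        · rw [if_neg hcnd] at h
          have hyv2 : y ≠ v := by
            intro hyv3
            apply hcnd
            left
            rw [hPt, hP3, hyv3]
            exact zt_adj (l1 := []) (l2 := P3)
          exact hdown_dir u y h (fun hc2 => hyv2 hc2.2)
      -- key induction: a flipped path starting at u stays off P and is an o-path
      have key : ∀ (l : List V), ∀ (x : V) (q : List V),
          List.Chain' (fun a b => flipDir ot.dir P a b = true) (x :: l) →
          (x :: l).Nodup → u ∉ l →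
          List.Chain' (fun a b => o.dir a b = true) (u :: q) →
          (u :: q).Nodup → (u :: q).getLast? = some x →
          (∀ z ∈ q, z ∉ P) → (∀ z ∈ q, z ∉ l) →
          ∃ q', List.Chain' (fun a b => o.dir a b = true) (u :: q') ∧
            (u :: q').Nodup ∧ (u :: q').getLast? = (x :: l).getLast? ∧
            ∀ z ∈ q', z ∉ P := by
        intro l
        induction l with
        | nil =>
          intro x q h1 h2 h3 h4 h5 h6 h7 h8
          exact ⟨q, h4, h5, by rw [h6]; simp, h7⟩
        | cons y l' ih =>
          intro x q hch1 hnd1 hul hchq hndq hlq hqP hql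
          have hedge : flipDir ot.dir P x y = true := (List.isChain_cons_cons.mp hch1).1
          have hxor : x = u ∨ x ∉ P := by
            rcases List.eq_nil_or_concat q with hq | ⟨q0, z, hq⟩
            · left
              rw [hq] at hlq
              have h9 : u = x := by simpa using hlq
              exact h9.symm
            · right
              have h9 : (u :: (q0 ++ [z])).getLast? = some z := by
                rw [show u :: (q0 ++ [z]) = (u :: q0) ++ [z] from rfl, List.getLast?_concat]
              rw [hq, List.concat_eq_append] at hlq
              rw [h9] at hlq
              have hxz : x = z := (Option.some.inj hlq).symm
              exact fun hxp => hqP x (by rw [hq, hxz]; simp) hxp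
          have hoxy : o.dir x y = true := by
            rcases hxor with hxu | hxP
            · rw [hxu] at hedge ⊢
              exact hedge_u y hedge
            · exact hT1 x y hxP hedge
          have hyu : y ≠ u := fun h => hul (by rw [← h]; exact List.mem_cons_self)
          by_cases hyP : y ∈ P
          · exfalso
            obtain ⟨A1, A2, hsplitA⟩ := List.append_of_mem hyP
            have hA1ne : A1 ≠ [] := by
              intro h
              rw [h] at hsplitA
              simp only [List.nil_append] at hsplitA
              apply hyu
              rw [hsplitA] at hheadP
              simpa using hheadP
            have huA := huP1 A1 y A2 hsplitA hA1ne
            have hchyA : List.Chain' (fun a b => o.dir a b = true) (y :: A2) := by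
              apply chain'_of_pairs
              intro c e hm
              have hmP : (c, e) ∈ P.zip P.tail := by
                rw [hsplitA]
                exact zt_append_right _ hm
              exact hdown_dir c e (chain'_pair hchP hmP)
                (fun hc2 => huA.2 (hc2.1 ▸ zt_fst_mem hm))
            have hndyA : (y :: A2).Nodup := by
              have := hndP
              rw [hsplitA, List.nodup_append'] at this
              exact this.2.1
            have hlastyA : (y :: A2).getLast? = some w := by
              rw [hsplitA, getLast?_append_right (by simp)] at hlastP
              exact hlastP
            have hchR : List.Chain' (fun a b => o.dir a b = true) ((u :: q) ++ y :: A2) := by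
              refine List.isChain_append.mpr ?_
              refine ⟨hchq, hchyA, ?_⟩
              intro x1 hx1 y1 hy1
              rw [hlq] at hx1
              rw [hoptmem x1 x hx1, hoptmem y1 y hy1]
              exact hoxy
            have hndR : ((u :: q) ++ y :: A2).Nodup := by
              rw [List.nodup_append']
              refine ⟨hndq, hndyA, ?_⟩
              intro z hz hz2
              rcases List.mem_cons.1 hz with rfl | hz
              · exact huA.2 hz2
              · exact hqP z hz (by rw [hsplitA]; exact List.mem_append_right _ hz2)
            have hpathR : IsPathFrom o ((u :: q) ++ y :: A2) u w :=
              ⟨⟨hndR, by simp; omega, hchR⟩, by rw [head?_append_left (by simp)]; rfl,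
                by rw [getLast?_append_right (by simp)]; exact hlastyA⟩
            have := hNoOld _ _ hpathR
            omega
          · have hynq : y ∉ q := fun h => hql y h (List.mem_cons_self)
            have hchq' : List.Chain' (fun a b => o.dir a b = true) ((u :: q) ++ [y]) := by
              refine List.isChain_append.mpr ?_
              refine ⟨hchq, List.isChain_singleton y, ?_⟩
              intro x1 hx1 y1 hy1
              rw [hlq] at hx1
              rw [hoptmem x1 x hx1, hoptmem y1 y hy1]
              exact hoxy
            have hndq' : ((u :: q) ++ [y]).Nodup := by
              rw [List.nodup_append']
              refine ⟨hndq, List.nodup_singleton y, ?_⟩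
              intro z hz hz2
              rw [List.mem_singleton.1 hz2] at hz
              rcases List.mem_cons.1 hz with h | h
              · exact hyu h
              · exact hynq h
            obtain ⟨q', h1', h2', h3', h4'⟩ := ih y (q ++ [y])
              (List.isChain_cons_cons.mp hch1).2
              ((List.nodup_cons.1 hnd1).2)
              (fun h => hul (List.mem_cons_of_mem _ h))
              (show List.Chain' (fun a b => o.dir a b = true) (u :: (q ++ [y])) from hchq')
              (show (u :: (q ++ [y])).Nodup from hndq')
              (by show ((u :: q) ++ [y]).getLast? = some y; rw [List.getLast?_concat])
              (by
                intro z hz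
                rcases List.mem_append.1 hz with hz | hz
                · exact hqP z hz
                · rw [List.mem_singleton.1 hz]
                  exact hyP)
              (by
                intro z hz
                rcases List.mem_append.1 hz with hz | hz
                · exact fun h => hql z hz (List.mem_cons_of_mem _ h)
                · rw [List.mem_singleton.1 hz]
                  exact (List.nodup_cons.1 (List.nodup_cons.1 hnd1).2).1)
            refine ⟨q', h1', h2', ?_, h4'⟩
            rw [h3']
            exact (List.getLast?_cons_cons).symm
      -- apply the induction to the suffix of Q starting at sv = u
      have hchsuf : List.Chain' (fun a b => flipDir ot.dir P a b = true) (sv :: m2) := by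
        rw [hsplitQ] at hchQ
        exact (List.isChain_append.mp hchQ).2.1
      have hndsuf : (sv :: m2).Nodup := by
        have := hndQ
        rw [hsplitQ, List.nodup_append'] at this
        exact this.2.1
      have hlastsuf : (sv :: m2).getLast? = some b := by
        rw [hsplitQ, getLast?_append_right (by simp)] at hlastQ
        exact hlastQ
      rw [hsvu] at hchsuf hndsuf hlastsuf
      have husm2 : u ∉ m2 := (List.nodup_cons.1 hndsuf).1
      obtain ⟨q', hq1, hq2, hq3, hq4⟩ := key m2 u [] hchsuf hndsuf husm2
        (List.isChain_singleton u) (List.nodup_singleton u) (by simp) (by simp) (by simp)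
      rw [hlastsuf] at hq3
      have hq'ne : q' ≠ [] := by
        intro h
        rw [h] at hq3
        have hub : u = b := by simpa using hq3
        exact hbP (hub ▸ humem)
      have hpathub : IsPathFrom o (u :: q') u b := by
        refine ⟨⟨hq2, ?_, hq1⟩, rfl, hq3⟩
        cases q' with
        | nil => exact absurd rfl hq'ne
        | cons c q => simp
      have := hNoOld _ _ hpathub
      omega
    · -- build an o-path from a to w, contradicting Invariant 1 for o
      have hchsv : List.Chain' (fun a b => o.dir a b = true) (sv :: P2) := by
        apply chain'_of_pairs
        intro c e hm
        have hmP : (c, e) ∈ P.zip P.tail := by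
          rw [hsplitP]
          exact zt_append_right _ hm
        refine hdown_dir c e (chain'_pair hchP hmP) ?_
        rintro ⟨hc, he⟩
        by_cases hP1 : P1 = []
        · have hsplitP' : P = sv :: P2 := by rw [hsplitP, hP1, List.nil_append]
          have hsvu : sv = u := by
            rw [hsplitP'] at hheadP
            simpa using hheadP
          have hndPs : (sv :: P2).Nodup := by rw [← hsplitP']; exact hndP
          have hcsv : c = sv := by rw [hc]; exact hsvu.symm
          apply hcase
          refine ⟨hsvu, ?_⟩
          rw [hsplitP']
          show P2.head? = some v
          rw [← he]
          have hiff := zt_succ_iff (P1 := ([] : List V)) (x := sv) (P2 := P2) (y := e)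
            (by simpa using hndPs)
          simp only [List.nil_append] at hiff
          apply hiff.mp
          rw [hcsv] at hm
          exact hm
        · have := (huP1 P1 sv P2 hsplitP hP1).2
          exact this (hc ▸ zt_fst_mem hm)
      have hlastsv : (sv :: P2).getLast? = some w := by
        rw [hsplitP, getLast?_append_right (by simp)] at hlastP
        exact hlastP
      have hndsv : (sv :: P2).Nodup := by
        have := hndP
        rw [hsplitP, List.nodup_append'] at this
        exact this.2.1
      have hchR : List.Chain' (fun a b => o.dir a b = true) (m1 ++ sv :: P2) := by
        refine List.isChain_append.mpr ?_
        have hparts := List.isChain_append.mp hchpre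
        refine ⟨hparts.1, hchsv, ?_⟩
        intro x hx y hy
        exact hparts.2.2 x hx y (by simpa using hy)
      have hndR : (m1 ++ sv :: P2).Nodup := by
        rw [List.nodup_append']
        refine ⟨(List.nodup_append'.mp hndpre).1, hndsv, ?_⟩
        intro z hz hz2
        apply hm1 z hz
        rw [hsplitP]
        exact List.mem_append_right _ hz2
      have hheadR : (m1 ++ sv :: P2).head? = some a := by
        rw [head?_append_left hm1ne]
        rw [head?_append_left hm1ne] at hheadpre
        exact hheadpre
      have := hinv _ _ _ ⟨⟨hndR, by
        cases m1 with
        | nil => exact absurd rfl hm1ne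
        | cons c q => simp; omega, hchR⟩, hheadR,
        by rw [getLast?_append_right (by simp)]; exact hlastsv⟩
      rw [← hd_def] at this
      omega
  · -- Q avoids P entirely: it is an o-path, contradicting Invariant 1 for o
    push_neg at hQP
    have hcho : List.Chain' (fun a b => o.dir a b = true) (a :: Qt) := by
      apply hOffChainO
      · exact hQP
      · exact hchQ
    have := hinv _ _ _ ⟨⟨hndQ, hlenQ, hcho⟩, hheadQ, hlastQ⟩
    rw [← hd_def] at this
    rw [hdegnot a (hQP a (List.mem_cons_self)), hdegnot b (hQP b hbQ)] at hcon
    omega
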